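/- For any diverging sequence (r_n) of positive integers, the set A = {α ∈ ℝ/ℤ : there exists a diverging subsequence (n_k) with ‖r_{n_k} α‖_ℤ → 0} has full Lebesgue measure in the circle. -/

import Mathlib

open Filter MeasureTheory Metric Set
open scoped ENNReal NNReal

namespace Stmt1Aux

noncomputable def hitR (q : ℕ) (ε : ℝ) : Set ℝ := {x | |q * x - round ((q:ℝ) * x)| < ε}

def hitC (q : ℕ) (ε : ℝ) : Set (AddCircle (1:ℝ)) := {α | ‖q • α‖ < ε}

lemma hitC_eq (q : ℕ) (ε : ℝ) :
    hitC q ε = (fun α : AddCircle (1:ℝ) => (q:ℤ) • α) ⁻¹' (ball 0 ε) := by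
  ext α
  simp [hitC, mem_ball_zero_iff, natCast_zsmul]

lemma measurableSet_hitC (q : ℕ) (ε : ℝ) : MeasurableSet (hitC q ε) := by
  rw [hitC_eq]
  exact measurableSet_ball.preimage (by fun_prop)

lemma volume_hitC (q : ℕ) (hq : 0 < q) {ε : ℝ} (hε : 0 < ε) (hε2 : 2*ε ≤ 1) :
    volume (hitC q ε) = ENNReal.ofReal (2*ε) := by
  rw [hitC_eq]
  rw [(MeasureTheory.Measure.measurePreserving_zsmul volume
      (by exact_mod_cast hq.ne' : (q:ℤ) ≠ 0)).measure_preimage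
      measurableSet_ball.nullMeasurableSet]
  rw [← measure_congr AddCircle.closedBall_ae_eq_ball, AddCircle.volume_closedBall]
  simp [min_eq_right hε2]

lemma coe_preimage_hitC (q : ℕ) (ε : ℝ) :
    (QuotientAddGroup.mk : ℝ → AddCircle (1:ℝ)) ⁻¹' hitC q ε = hitR q ε := by
  ext x
  have h1 : (q • (x : AddCircle (1:ℝ))) = ((q * x : ℝ) : AddCircle (1:ℝ)) := by
    rw [← AddCircle.coe_nsmul, nsmul_eq_mul]
  simp only [hitC, hitR, mem_preimage, mem_setOf_eq]
  rw [show ((QuotientAddGroup.mk x : AddCircle (1:ℝ))) = (x : AddCircle (1:ℝ)) from rfl]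
  rw [h1, AddCircle.norm_eq]
  norm_num

lemma cover (q : ℕ) (hq : 0 < q) {ε a b : ℝ} (hε : 0 < ε) :
    hitR q ε ∩ Icc a b ⊆
      ⋃ j ∈ Finset.Icc ⌈(q:ℝ)*a - ε⌉ ⌊(q:ℝ)*b + ε⌋,
        Ioo (((j:ℝ) - ε)/q) (((j:ℝ) + ε)/q) := by
  rintro x ⟨hx, hab⟩
  have hq' : (0:ℝ) < q := by exact_mod_cast hq
  set j := round ((q:ℝ) * x) with hj
  have habs : |(q:ℝ) * x - j| < ε := hx
  have h1 : (j:ℝ) - ε < q * x := by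
    cases' abs_lt.mp habs with h _; linarith
  have h2 : (q:ℝ) * x < j + ε := by
    cases' abs_lt.mp habs with _ h; linarith
  have hqa : (q:ℝ) * a ≤ q * x := by nlinarith [hab.1]
  have hqb : (q:ℝ) * x ≤ q * b := by nlinarith [hab.2]
  have hmem : j ∈ Finset.Icc ⌈(q:ℝ)*a - ε⌉ ⌊(q:ℝ)*b + ε⌋ := by
    refine Finset.mem_Icc.mpr ⟨?_, ?_⟩
    · exact Int.ceil_le.mpr (by push_cast; linarith)
    · exact Int.le_floor.mpr (by push_cast; linarith)
  refine mem_biUnion hmem ?_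
  constructor
  · rw [div_lt_iff₀ hq']; linarith
  · rw [lt_div_iff₀ hq']; linarith

lemma card_bound (q : ℕ) (hq : 0 < q) {ε a b : ℝ} (hε : 0 < ε) (hab : a ≤ b) :
    ((Finset.Icc ⌈(q:ℝ)*a - ε⌉ ⌊(q:ℝ)*b + ε⌋).card : ℝ) ≤ (q:ℝ)*(b-a) + 2*ε + 1 := by
  have hq' : (0:ℝ) < q := by exact_mod_cast hq
  have hba : (0:ℝ) ≤ (q:ℝ) * (b - a) := mul_nonneg hq'.le (sub_nonneg.mpr hab)
  rw [Int.card_Icc]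
  rcases le_or_gt (⌈(q:ℝ)*a - ε⌉ : ℤ) ⌊(q:ℝ)*b + ε⌋ with h | h
  · have hnn : (0:ℤ) ≤ ⌊(q:ℝ)*b + ε⌋ + 1 - ⌈(q:ℝ)*a - ε⌉ := by omega
    rw [show (((⌊(q:ℝ)*b + ε⌋ + 1 - ⌈(q:ℝ)*a - ε⌉).toNat : ℕ) : ℝ)
        = ((⌊(q:ℝ)*b + ε⌋ + 1 - ⌈(q:ℝ)*a - ε⌉ : ℤ) : ℝ) from by
      rw [← Int.cast_natCast, Int.toNat_of_nonneg hnn]]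
    have h1 := Int.floor_le ((q:ℝ)*b + ε)
    have h2 := Int.le_ceil ((q:ℝ)*a - ε)
    push_cast
    linarith
  · rw [Int.toNat_of_nonpos (by omega)]
    push_cast
    linarith

lemma measure_piece (q : ℕ) (hq : 0 < q) {ε a b : ℝ} (hε : 0 < ε) (hab : a ≤ b) :
    volume (hitR q ε ∩ Icc a b) ≤
      ENNReal.ofReal (((q:ℝ)*(b-a) + 2*ε + 1) * (2*ε/q)) := by
  have hq' : (0:ℝ) < q := by exact_mod_cast hq
  have hba : (0:ℝ) ≤ (q:ℝ) * (b - a) := mul_nonneg hq'.le (sub_nonneg.mpr hab)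
  calc volume (hitR q ε ∩ Icc a b)
      ≤ volume (⋃ j ∈ Finset.Icc ⌈(q:ℝ)*a - ε⌉ ⌊(q:ℝ)*b + ε⌋,
          Ioo (((j:ℝ) - ε)/q) (((j:ℝ) + ε)/q)) := measure_mono (cover q hq hε)
    _ ≤ ∑ j ∈ Finset.Icc ⌈(q:ℝ)*a - ε⌉ ⌊(q:ℝ)*b + ε⌋,
          volume (Ioo (((j:ℝ) - ε)/q) (((j:ℝ) + ε)/q)) := measure_biUnion_finset_le _ _
    _ = ∑ j ∈ Finset.Icc ⌈(q:ℝ)*a - ε⌉ ⌊(q:ℝ)*b + ε⌋, ENNReal.ofReal (2*ε/q) := by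
        refine Finset.sum_congr rfl fun j _ => ?_
        rw [Real.volume_Ioo]
        congr 1
        field_simp
        ring
    _ = ((Finset.Icc ⌈(q:ℝ)*a - ε⌉ ⌊(q:ℝ)*b + ε⌋).card : ℝ≥0∞) * ENNReal.ofReal (2*ε/q) := by
        rw [Finset.sum_const, nsmul_eq_mul]
    _ ≤ ENNReal.ofReal (((q:ℝ)*(b-a) + 2*ε + 1)) * ENNReal.ofReal (2*ε/q) := by
        gcongr
        rw [← ENNReal.ofReal_natCast]
        exact ENNReal.ofReal_le_ofReal (card_bound q hq hε hab)
    _ = ENNReal.ofReal (((q:ℝ)*(b-a) + 2*ε + 1) * (2*ε/q)) := by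
        rw [← ENNReal.ofReal_mul (by linarith)]

lemma pairR (q q' : ℕ) (hq : 0 < q) (hq' : 0 < q') {ε : ℝ} (hε : 0 < ε) (hε2 : ε ≤ 1/2) :
    volume (hitR q ε ∩ hitR q' ε ∩ Icc 0 1) ≤
      ENNReal.ofReal (4*ε^2 + 8*ε^2/q + 12*ε*q/q') := by
  have hqR : (0:ℝ) < q := by exact_mod_cast hq
  have hq'R : (0:ℝ) < q' := by exact_mod_cast hq'
  have hsub : hitR q ε ∩ hitR q' ε ∩ Icc 0 1 ⊆
      ⋃ i ∈ Finset.Icc ⌈(q:ℝ)*0 - ε⌉ ⌊(q:ℝ)*1 + ε⌋,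
        (hitR q' ε ∩ Icc (((i:ℝ) - ε)/q) (((i:ℝ) + ε)/q)) := by
    rintro x ⟨⟨hx1, hx2⟩, hx3⟩
    have := cover q hq (a := 0) (b := 1) hε ⟨hx1, hx3⟩
    rcases mem_iUnion₂.mp this with ⟨i, hi, hIoo⟩
    exact mem_biUnion hi ⟨hx2, Ioo_subset_Icc_self hIoo⟩
  calc volume (hitR q ε ∩ hitR q' ε ∩ Icc 0 1)
      ≤ ∑ i ∈ Finset.Icc ⌈(q:ℝ)*0 - ε⌉ ⌊(q:ℝ)*1 + ε⌋,
          volume (hitR q' ε ∩ Icc (((i:ℝ) - ε)/q) (((i:ℝ) + ε)/q)) :=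
        le_trans (measure_mono hsub) (measure_biUnion_finset_le _ _)
    _ ≤ ∑ i ∈ Finset.Icc ⌈(q:ℝ)*0 - ε⌉ ⌊(q:ℝ)*1 + ε⌋,
          ENNReal.ofReal (((q':ℝ)*(2*ε/q) + 2*ε + 1) * (2*ε/q')) := by
        refine Finset.sum_le_sum fun i _ => ?_
        have hab : ((i:ℝ) - ε)/q ≤ ((i:ℝ) + ε)/q := by
          gcongr
          linarith
        have hba : ((i:ℝ) + ε)/q - ((i:ℝ) - ε)/q = 2*ε/q := by
          field_simp; ring
        have := measure_piece q' hq' hε hab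
        rwa [hba] at this
    _ = ((Finset.Icc ⌈(q:ℝ)*0 - ε⌉ ⌊(q:ℝ)*1 + ε⌋).card : ℝ≥0∞) *
          ENNReal.ofReal (((q':ℝ)*(2*ε/q) + 2*ε + 1) * (2*ε/q')) := by
        rw [Finset.sum_const, nsmul_eq_mul]
    _ ≤ ENNReal.ofReal ((q:ℝ) + 2*ε + 1) *
          ENNReal.ofReal (((q':ℝ)*(2*ε/q) + 2*ε + 1) * (2*ε/q')) := by
        gcongr
        rw [← ENNReal.ofReal_natCast]
        apply ENNReal.ofReal_le_ofReal
        have := card_bound q hq (a := 0) (b := 1) hε zero_le_one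
        simpa using this
    _ ≤ ENNReal.ofReal (4*ε^2 + 8*ε^2/q + 12*ε*q/q') := by
        rw [← ENNReal.ofReal_mul (by positivity)]
        apply ENNReal.ofReal_le_ofReal
        have key : ((q:ℝ) + 2*ε + 1) * (((q':ℝ)*(2*ε/q) + 2*ε + 1) * (2*ε/q'))
            = 4*ε^2*((q:ℝ) + 2*ε + 1)/q + (2*ε+1)*(2*ε)*((q:ℝ) + 2*ε + 1)/q' := by
          field_simp
          ring
        rw [key]
        have e1 : 4*ε^2*((q:ℝ)+2*ε+1)/q = 4*ε^2 + (4*ε^2*(2*ε+1))/q := by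
          field_simp; ring
        have h1 : 4*ε^2*((q:ℝ) + 2*ε + 1)/q ≤ 4*ε^2 + 8*ε^2/q := by
          rw [e1]
          have h3 : (4*ε^2*(2*ε+1))/(q:ℝ) ≤ 8*ε^2/q := by
            rw [div_le_div_iff₀ hqR hqR]
            nlinarith [mul_nonneg (mul_nonneg (by linarith : (0:ℝ) ≤ 1 - 2*ε)
              (by positivity : (0:ℝ) ≤ 4*ε^2)) hqR.le]
          linarith
        have h2 : (2*ε+1)*(2*ε)*((q:ℝ) + 2*ε + 1)/q' ≤ 12*ε*q/q' := by
          rw [div_le_div_iff₀ hq'R hq'R]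
          have hq1 : (1:ℝ) ≤ q := by exact_mod_cast hq
          have hB : (q:ℝ) + 2*ε + 1 ≤ 3*q := by linarith
          have hnn : (0:ℝ) ≤ (2*ε+1)*(2*ε) := by positivity
          have hC : (2*ε+1)*(2*ε) ≤ 4*ε := by nlinarith
          nlinarith [mul_le_mul_of_nonneg_left hB hnn,
            mul_le_mul_of_nonneg_right hC (by positivity : (0:ℝ) ≤ 3*(q:ℝ)),
            mul_pos hq'R hq'R]
        linarith

lemma pairC (q q' : ℕ) (hq : 0 < q) (hq' : 0 < q') {ε : ℝ} (hε : 0 < ε) (hε2 : ε ≤ 1/2) :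
    volume (hitC q ε ∩ hitC q' ε) ≤
      ENNReal.ofReal (4*ε^2 + 8*ε^2/q + 12*ε*q/q') := by
  rw [AddCircle.add_projection_respects_measure (1:ℝ) 0
    ((measurableSet_hitC q ε).inter (measurableSet_hitC q' ε))]
  refine le_trans (measure_mono ?_) (pairR q q' hq hq' hε hε2)
  rw [preimage_inter, coe_preimage_hitC, coe_preimage_hitC]
  rw [show (0:ℝ) + 1 = 1 by norm_num]
  exact inter_subset_inter_right _ Ioc_subset_Icc_self

noncomputable def Bf (ε : ℝ) (j k : ℕ) : ℝ :=
  4*ε^2 + 8*ε*((1/2)^j + (1/2)^k) + (if j = k then 2*ε else 12*ε*(1/2)^(max j k - min j k))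

lemma G1 (j : ℕ) : ∑ k ∈ Finset.range j, ((1:ℝ)/2)^(j-k) ≤ 1 := by
  have hr := Finset.sum_range_reflect (fun k => ((1:ℝ)/2)^(j-k)) j
  rw [← hr]
  have h : ∀ k ∈ Finset.range j, ((1:ℝ)/2)^(j-(j-1-k)) = (1/2) * (1/2)^k := by
    intro k hk
    rw [Finset.mem_range] at hk
    rw [show j-(j-1-k) = k+1 by omega, pow_succ]
    ring
  rw [Finset.sum_congr rfl h, ← Finset.mul_sum]
  have := sum_geometric_two_le j
  linarith

lemma Qsum {ε : ℝ} (hε : 0 < ε) (K j : ℕ) (hj : j < K) :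
    ∑ k ∈ Finset.range K, (if j = k then 2*ε else 12*ε*(1/2:ℝ)^(max j k - min j k)) ≤ 38*ε := by
  rw [Finset.range_eq_Ico, ← Finset.sum_Ico_consecutive _ (Nat.zero_le j) hj.le]
  have e1 : ∑ k ∈ Finset.Ico 0 j, (if j = k then 2*ε else 12*ε*(1/2:ℝ)^(max j k - min j k))
      = ∑ k ∈ Finset.range j, 12*ε*(1/2:ℝ)^(j-k) := by
    rw [← Finset.range_eq_Ico]
    refine Finset.sum_congr rfl fun k hk => ?_
    rw [Finset.mem_range] at hk
    rw [if_neg (by omega), max_eq_left hk.le, min_eq_right hk.le]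
  have b1 : ∑ k ∈ Finset.range j, 12*ε*(1/2:ℝ)^(j-k) ≤ 12*ε := by
    rw [← Finset.mul_sum]
    nlinarith [G1 j, Finset.sum_nonneg (fun k (_ : k ∈ Finset.range j) =>
      pow_nonneg (by norm_num : (0:ℝ) ≤ 1/2) (j-k))]
  have e2 : ∑ k ∈ Finset.Ico j K, (if j = k then 2*ε else 12*ε*(1/2:ℝ)^(max j k - min j k))
      = ∑ i ∈ Finset.range (K-j), (if i = 0 then 2*ε else 12*ε*(1/2:ℝ)^i) := by
    rw [Finset.sum_Ico_eq_sum_range]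
    refine Finset.sum_congr rfl fun i _ => ?_
    rcases Nat.eq_zero_or_pos i with h0 | h0
    · subst h0; simp
    · rw [if_neg (by omega), if_neg (by omega), max_eq_right (by omega), min_eq_left (by omega)]
      congr 2
      omega
  have b2 : ∑ i ∈ Finset.range (K-j), (if i = 0 then 2*ε else 12*ε*(1/2:ℝ)^i) ≤ 26*ε := by
    have hterm : ∀ i ∈ Finset.range (K-j), (if i = 0 then 2*ε else 12*ε*(1/2:ℝ)^i)
        ≤ (if i = 0 then 2*ε else 0) + 12*ε*(1/2:ℝ)^i := by
      intro i _
      rcases eq_or_ne i 0 with h | h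
      · subst h; simp; positivity
      · rw [if_neg h, if_neg h]; linarith
    refine le_trans (Finset.sum_le_sum hterm) ?_
    rw [Finset.sum_add_distrib, ← Finset.mul_sum]
    have s1 : ∑ i ∈ Finset.range (K-j), (if i = 0 then 2*ε else 0) ≤ 2*ε := by
      rcases Nat.eq_zero_or_pos (K-j) with h | h
      · simp [h]; positivity
      · rw [Finset.sum_ite_eq' (Finset.range (K-j)) 0 (fun _ => 2*ε)]
        simp [Finset.mem_range.mpr h]
    have s2 : (12*ε) * ∑ i ∈ Finset.range (K-j), ((1:ℝ)/2)^i ≤ 24*ε := by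
      nlinarith [sum_geometric_two_le (K-j), Finset.sum_nonneg (fun i (_ : i ∈ Finset.range (K-j)) =>
        pow_nonneg (by norm_num : (0:ℝ) ≤ 1/2) i)]
    linarith
  rw [e1, e2] at *
  linarith

lemma Bsum {ε : ℝ} (hε : 0 < ε) (K : ℕ) :
    ∑ j ∈ Finset.range K, ∑ k ∈ Finset.range K, Bf ε j k ≤ 4*ε^2*K^2 + 100*ε*K := by
  have hsplit : ∀ j ∈ Finset.range K, ∑ k ∈ Finset.range K, Bf ε j k
      ≤ 4*ε^2*K + (8*ε*(1/2:ℝ)^j*K + 16*ε) + 38*ε := by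
    intro j hj
    rw [Finset.mem_range] at hj
    simp only [Bf]
    rw [Finset.sum_add_distrib, Finset.sum_add_distrib]
    have p1 : ∑ _k ∈ Finset.range K, 4*ε^2 = 4*ε^2*(K:ℝ) := by
      rw [Finset.sum_const, Finset.card_range, nsmul_eq_mul]; ring
    have p2 : ∑ k ∈ Finset.range K, 8*ε*((1/2:ℝ)^j + (1/2)^k)
        ≤ 8*ε*(1/2:ℝ)^j*K + 16*ε := by
      have e : ∀ k ∈ Finset.range K, 8*ε*((1/2:ℝ)^j+(1/2)^k)
          = 8*ε*(1/2:ℝ)^j + 8*ε*(1/2)^k := fun k _ => by ring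
      rw [Finset.sum_congr rfl e, Finset.sum_add_distrib, Finset.sum_const, Finset.card_range,
        nsmul_eq_mul, ← Finset.mul_sum]
      have hg := sum_geometric_two_le K
      have hg0 : (0:ℝ) ≤ ∑ i ∈ Finset.range K, ((1:ℝ)/2)^i :=
        Finset.sum_nonneg fun i _ => pow_nonneg (by norm_num) i
      nlinarith
    have p3 := Qsum hε K j hj
    rw [p1]
    linarith
  refine le_trans (Finset.sum_le_sum hsplit) ?_
  rw [Finset.sum_add_distrib, Finset.sum_add_distrib]
  have t1 : ∑ _j ∈ Finset.range K, 4*ε^2*(K:ℝ) = 4*ε^2*(K:ℝ)^2 := by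
    rw [Finset.sum_const, Finset.card_range, nsmul_eq_mul]; ring
  have t3 : ∑ _j ∈ Finset.range K, 38*ε = 38*ε*(K:ℝ) := by
    rw [Finset.sum_const, Finset.card_range, nsmul_eq_mul]; ring
  have t2 : ∑ j ∈ Finset.range K, (8*ε*(1/2:ℝ)^j*(K:ℝ) + 16*ε) ≤ 32*ε*K := by
    rw [Finset.sum_add_distrib, Finset.sum_const, Finset.card_range, nsmul_eq_mul]
    have e : ∀ j ∈ Finset.range K, 8*ε*(1/2:ℝ)^j*(K:ℝ) = 8*ε*(K:ℝ)*(1/2:ℝ)^j :=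
      fun j _ => by ring
    rw [Finset.sum_congr rfl e, ← Finset.mul_sum]
    have hg := sum_geometric_two_le K
    have hg0 : (0:ℝ) ≤ ∑ i ∈ Finset.range K, ((1:ℝ)/2)^i :=
      Finset.sum_nonneg fun i _ => pow_nonneg (by norm_num) i
    have hK : (0:ℝ) ≤ K := Nat.cast_nonneg K
    nlinarith [mul_nonneg (mul_nonneg hε.le hK)
      (by linarith : (0:ℝ) ≤ 2 - ∑ i ∈ Finset.range K, ((1:ℝ)/2)^i)]
  rw [t1, t3]
  have hεK : (0:ℝ) ≤ ε*K := mul_nonneg hε.le (Nat.cast_nonneg K)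
  linarith

lemma Bf_nonneg {ε : ℝ} (hε : 0 < ε) (j k : ℕ) : 0 ≤ Bf ε j k := by
  unfold Bf
  have h1 : (0:ℝ) ≤ (if j = k then 2*ε else 12*ε*(1/2:ℝ)^(max j k - min j k)) := by
    split <;> positivity
  positivity

section Lac

variable {q : ℕ → ℕ} (hq : ∀ k, 0 < q k) (hlac : ∀ k, 2 * q k ≤ q (k+1))

include hq hlac

lemma grow1 : ∀ k, 2^k ≤ q k := by
  intro k
  induction k with
  | zero => simpa using Nat.succ_le_of_lt (hq 0)
  | succ n ih =>
    calc 2^(n+1) = 2 * 2^n := by ring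
    _ ≤ 2 * q n := by omega
    _ ≤ q (n+1) := hlac n

lemma grow2 : ∀ j d, q j * 2^d ≤ q (j+d) := by
  intro j d
  induction d with
  | zero => simp
  | succ n ih =>
    calc q j * 2^(n+1) = (q j * 2^n) * 2 := by ring
    _ ≤ q (j+n) * 2 := by omega
    _ ≤ q (j+n+1) := by have := hlac (j+n); omega

lemma vol_pair_le_Bf {ε : ℝ} (hε : 0 < ε) (hε2 : ε ≤ 1/2) (j k : ℕ) :
    volume (hitC (q j) ε ∩ hitC (q k) ε) ≤ ENNReal.ofReal (Bf ε j k) := by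
  have main : ∀ a b : ℕ, a < b →
      volume (hitC (q a) ε ∩ hitC (q b) ε) ≤ ENNReal.ofReal (Bf ε a b) := by
    intro a b hab
    refine le_trans (pairC (q a) (q b) (hq a) (hq b) hε hε2) (ENNReal.ofReal_le_ofReal ?_)
    unfold Bf
    rw [if_neg hab.ne, max_eq_right hab.le, min_eq_left hab.le]
    have hqa : (0:ℝ) < q a := by exact_mod_cast hq a
    have hqb : (0:ℝ) < q b := by exact_mod_cast hq b
    have h2a : (2:ℝ)^a ≤ q a := by exact_mod_cast grow1 hq hlac a
    have h1 : 8*ε^2/(q a) ≤ 8*ε*(1/2:ℝ)^a := by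
      rw [div_le_iff₀ hqa, div_pow, one_pow]
      rw [show 8*ε*(1/(2:ℝ)^a)*(q a) = 8*ε*((q a)/(2:ℝ)^a) by ring]
      have h2 : (1:ℝ) ≤ (q a)/(2:ℝ)^a := by
        rw [le_div_iff₀ (by positivity)]
        linarith
      nlinarith
    have h2 : 12*ε*(q a)/(q b) ≤ 12*ε*(1/2:ℝ)^(b-a) := by
      have hg : (q a : ℝ) * 2^(b-a) ≤ q b := by
        have := grow2 hq hlac a (b-a)
        rw [show a + (b-a) = b by omega] at this
        exact_mod_cast this
      rw [div_pow, one_pow, div_le_iff₀ hqb]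
      have hp : (0:ℝ) < (2:ℝ)^(b-a) := by positivity
      have key : (q a : ℝ) ≤ (1/(2:ℝ)^(b-a)) * q b := by
        rw [one_div, inv_mul_eq_div, le_div_iff₀ hp]
        linarith
      nlinarith [mul_le_mul_of_nonneg_left key (show (0:ℝ) ≤ 12*ε by positivity)]
    have hk0 : (0:ℝ) ≤ 8*ε*(1/2:ℝ)^b := by positivity
    linarith
  rcases lt_trichotomy j k with h | h | h
  · exact main j k h
  · subst h
    rw [inter_self]
    rw [volume_hitC (q j) (hq j) hε (by linarith)]
    apply ENNReal.ofReal_le_ofReal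
    unfold Bf
    rw [if_pos rfl]
    have h1 : (0:ℝ) ≤ 4*ε^2 := by positivity
    have h2 : (0:ℝ) ≤ 8*ε*((1/2:ℝ)^j+(1/2:ℝ)^j) := by positivity
    linarith
  · rw [inter_comm]
    refine le_trans (main k j h) (ENNReal.ofReal_le_ofReal ?_)
    unfold Bf
    rw [if_neg h.ne, if_neg h.ne', max_comm, min_comm]
    linarith
end Lac

lemma circle_univ : (volume (univ : Set (AddCircle (1:ℝ)))) = 1 := by
  rw [AddCircle.measure_univ]; norm_num

lemma main_bound {q : ℕ → ℕ} (hq : ∀ k, 0 < q k) (hlac : ∀ k, 2 * q k ≤ q (k+1))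
    {ε : ℝ} (hε : 0 < ε) (hε2 : ε ≤ 1/2) (K : ℕ) (hK : 1 ≤ K) :
    volume ((⋃ k ∈ Finset.range K, hitC (q k) ε)ᶜ) ≤ ENNReal.ofReal (25/(ε*K)) := by
  set U : Set (AddCircle (1:ℝ)) := ⋃ k ∈ Finset.range K, hitC (q k) ε with hU
  have hUmeas : MeasurableSet U :=
    Finset.measurableSet_biUnion _ (fun k _ => measurableSet_hitC (q k) ε)
  set S : AddCircle (1:ℝ) → ℝ≥0∞ :=
    fun x => ∑ k ∈ Finset.range K, (hitC (q k) ε).indicator 1 x with hS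
  have hSmeas : Measurable S := by
    apply Finset.measurable_sum
    exact fun k _ => measurable_one.indicator (measurableSet_hitC (q k) ε)
  have hKR : (0:ℝ) < K := by exact_mod_cast hK
  -- first moment
  have hS1 : ∫⁻ x, S x = ENNReal.ofReal (2*ε*K) := by
    rw [hS]
    rw [lintegral_finset_sum _ (fun k _ => measurable_one.indicator (measurableSet_hitC (q k) ε))]
    have : ∀ k ∈ Finset.range K, ∫⁻ x, (hitC (q k) ε).indicator 1 x = ENNReal.ofReal (2*ε) := by
      intro k _
      rw [lintegral_indicator_one (measurableSet_hitC (q k) ε)]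
      exact volume_hitC (q k) (hq k) hε (by linarith)
    rw [Finset.sum_congr rfl this, Finset.sum_const, Finset.card_range, nsmul_eq_mul,
      ← ENNReal.ofReal_natCast K, ← ENNReal.ofReal_mul (by positivity)]
    congr 1
    ring
  -- second moment
  have hS2 : ∫⁻ x, S x * S x ≤ ENNReal.ofReal (4*ε^2*K^2 + 100*ε*K) := by
    have hpt : ∀ x, S x * S x
        = ∑ j ∈ Finset.range K, ∑ k ∈ Finset.range K,
            ((hitC (q j) ε ∩ hitC (q k) ε).indicator 1 x) := by
      intro x
      rw [hS]
      rw [Finset.sum_mul_sum]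
      refine Finset.sum_congr rfl fun j _ => Finset.sum_congr rfl fun k _ => ?_
      rw [Set.inter_indicator_one]
      rfl
    simp_rw [hpt]
    rw [lintegral_finset_sum _ (fun j _ => Finset.measurable_sum _
      (fun k _ => measurable_one.indicator
        ((measurableSet_hitC (q j) ε).inter (measurableSet_hitC (q k) ε))))]
    have step : ∀ j ∈ Finset.range K,
        ∫⁻ x, (∑ k ∈ Finset.range K, (hitC (q j) ε ∩ hitC (q k) ε).indicator 1 x)
          ≤ ∑ k ∈ Finset.range K, ENNReal.ofReal (Bf ε j k) := by
      intro j _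
      rw [lintegral_finset_sum _ (fun k _ => measurable_one.indicator
        ((measurableSet_hitC (q j) ε).inter (measurableSet_hitC (q k) ε)))]
      refine Finset.sum_le_sum fun k _ => ?_
      rw [lintegral_indicator_one ((measurableSet_hitC (q j) ε).inter (measurableSet_hitC (q k) ε))]
      exact vol_pair_le_Bf hq hlac hε hε2 j k
    refine le_trans (Finset.sum_le_sum step) ?_
    have e1 : ∀ j ∈ Finset.range K, ∑ k ∈ Finset.range K, ENNReal.ofReal (Bf ε j k)
        = ENNReal.ofReal (∑ k ∈ Finset.range K, Bf ε j k) :=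
      fun j _ => (ENNReal.ofReal_sum_of_nonneg (fun k _ => Bf_nonneg hε j k)).symm
    rw [Finset.sum_congr rfl e1,
      ← ENNReal.ofReal_sum_of_nonneg (fun j _ => Finset.sum_nonneg fun k _ => Bf_nonneg hε j k)]
    exact ENNReal.ofReal_le_ofReal (Bsum hε K)
  -- Cauchy-Schwarz
  set g : AddCircle (1:ℝ) → ℝ≥0∞ := U.indicator 1 with hgdef
  have hg : Measurable g := measurable_one.indicator hUmeas
  have hfg : (S * g) = S := by
    funext x
    rw [Pi.mul_apply]
    by_cases hx : x ∈ U
    · rw [hgdef]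
      simp [indicator_of_mem hx]
    · have hSx : S x = 0 := by
        rw [hS]
        refine Finset.sum_eq_zero fun k hk => ?_
        apply indicator_of_notMem
        intro hmem
        exact hx (mem_biUnion hk hmem)
      simp [hSx]
  have CS := ENNReal.lintegral_mul_le_Lp_mul_Lq volume
    (⟨by norm_num, by norm_num, by norm_num⟩ : Real.HolderConjugate 2 2)
    hSmeas.aemeasurable hg.aemeasurable
  rw [hfg] at CS
  have hgsq : ∀ x, (g x) ^ (2:ℝ) = g x := by
    intro x
    rw [hgdef]
    by_cases hx : x ∈ U
    · simp [indicator_of_mem hx]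
    · simp [indicator_of_notMem hx, ENNReal.zero_rpow_of_pos (by norm_num : (0:ℝ) < 2)]
  have hfsq : ∀ x, (S x) ^ (2:ℝ) = S x * S x := by
    intro x
    rw [show (2:ℝ) = ((2:ℕ):ℝ) by norm_num, ENNReal.rpow_natCast, pow_two]
  simp_rw [hgsq, hfsq] at CS
  rw [hgdef, lintegral_indicator_one hUmeas] at CS
  rw [hS1] at CS
  -- square the inequality
  have key : ENNReal.ofReal (2*ε*K) * ENNReal.ofReal (2*ε*K)
      ≤ (∫⁻ x, S x * S x) * volume U := by
    refine le_trans (mul_le_mul' CS CS) (le_of_eq ?_)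
    rw [show ∀ a b : ℝ≥0∞, (a^((1:ℝ)/2) * b^((1:ℝ)/2)) * (a^((1:ℝ)/2) * b^((1:ℝ)/2))
        = (a^((1:ℝ)/2) * a^((1:ℝ)/2)) * (b^((1:ℝ)/2) * b^((1:ℝ)/2)) from fun a b => by ring]
    rw [← ENNReal.rpow_add_of_nonneg _ _ (by norm_num) (by norm_num),
      ← ENNReal.rpow_add_of_nonneg _ _ (by norm_num) (by norm_num)]
    norm_num
  have key2 : ENNReal.ofReal (2*ε*K) * ENNReal.ofReal (2*ε*K)
      ≤ ENNReal.ofReal (4*ε^2*K^2 + 100*ε*K) * volume U :=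
    le_trans key (mul_le_mul' hS2 le_rfl)
  -- to reals
  have hUfin : volume U ≠ ⊤ := measure_ne_top _ _
  set u : ℝ := (volume U).toReal with hu
  have hu0 : 0 ≤ u := ENNReal.toReal_nonneg
  have hu1 : u ≤ 1 := by
    rw [hu]
    have h : volume U ≤ volume (univ : Set (AddCircle (1:ℝ))) := measure_mono (subset_univ U)
    rw [circle_univ] at h
    calc (volume U).toReal ≤ (1 : ℝ≥0∞).toReal := ENNReal.toReal_mono (by norm_num) h
      _ = 1 := by norm_num
  have hvolU : volume U = ENNReal.ofReal u := (ENNReal.ofReal_toReal hUfin).symm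
  rw [hvolU, ← ENNReal.ofReal_mul (by positivity), ← ENNReal.ofReal_mul (by positivity)] at key2
  have hreal : (2*ε*K) * (2*ε*K) ≤ (4*ε^2*K^2 + 100*ε*K) * u := by
    rw [ENNReal.ofReal_le_ofReal_iff (by positivity)] at key2
    exact key2
  -- conclude
  have hcompl : volume Uᶜ = ENNReal.ofReal (1 - u) := by
    rw [measure_compl hUmeas hUfin, circle_univ, hvolU,
      ← ENNReal.ofReal_one, ← ENNReal.ofReal_sub _ hu0]
  rw [hcompl]
  apply ENNReal.ofReal_le_ofReal
  rw [sub_le_iff_le_add, div_add' _ _ _ (by positivity), le_div_iff₀ (by positivity)]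
  nlinarith [mul_pos hε hKR, mul_pos (mul_pos hε hKR) (mul_pos hε hKR)]

end Stmt1Aux

open Stmt1Aux

/-- For any diverging sequence `(r n)` of positive integers, the set of `α` in the circle
`ℝ/ℤ` such that `‖r_{n_k} α‖_ℤ → 0` along some diverging subsequence `(n_k)` has full
Lebesgue measure (the Lebesgue/Haar measure on `ℝ/ℤ` has total mass `1`). -/

theorem stmt1 (r : ℕ → ℕ) (hrpos : ∀ n, 0 < r n) (hr : Tendsto r atTop atTop) :
    volume {α : AddCircle (1 : ℝ) |
      ∃ nk : ℕ → ℕ, StrictMono nk ∧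
        Tendsto (fun k => ‖(r (nk k)) • α‖) atTop (nhds 0)} = 1 := by
  -- the bad sets
  set ε : ℕ → ℝ := fun m => 1/(m+2) with hεdef
  have hε0 : ∀ m, 0 < ε m := by intro m; positivity
  have hε2 : ∀ m : ℕ, ε m ≤ 1/2 := by
    intro m
    rw [hεdef]
    rw [div_le_div_iff₀ (by positivity) (by norm_num)]
    push_cast
    linarith [Nat.cast_nonneg (α := ℝ) m]
  -- the subsequence extractor
  obtain ⟨f, hf1, hf2⟩ : ∃ f : ℕ → ℕ → ℕ, (∀ m b, m < f m b) ∧ (∀ m b, b ≤ r (f m b)) := by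
    have hex : ∀ m b : ℕ, ∃ n, m < n ∧ b ≤ r n := fun m b =>
      ((eventually_gt_atTop m).and (hr.eventually_ge_atTop b)).exists
    exact ⟨fun m b => (hex m b).choose, fun m b => (hex m b).choose_spec.1,
      fun m b => (hex m b).choose_spec.2⟩
  -- each Bad set is null
  have hBadNull : ∀ m N : ℕ, volume {α : AddCircle (1:ℝ) | ∀ n, N ≤ n → ε m ≤ ‖r n • α‖} = 0 := by
    intro m N
    set φ : ℕ → ℕ := fun k => Nat.rec N (fun _ p => f p (2 * r p)) k with hφdef
    have hφs : ∀ k, φ (k+1) = f (φ k) (2 * r (φ k)) := fun k => rfl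
    have hφN : ∀ k, N ≤ φ k := by
      intro k
      induction k with
      | zero => exact le_rfl
      | succ n ih =>
        rw [hφs n]
        exact le_trans ih (hf1 _ _).le
    have hq : ∀ k, 0 < r (φ k) := fun k => hrpos _
    have hlac : ∀ k, 2 * r (φ k) ≤ r (φ (k+1)) := by
      intro k
      rw [hφs k]
      exact hf2 _ _
    set Bad := {α : AddCircle (1:ℝ) | ∀ n, N ≤ n → ε m ≤ ‖r n • α‖} with hBad
    have hsub : ∀ K : ℕ, Bad ⊆ (⋃ k ∈ Finset.range K, hitC (r (φ k)) (ε m))ᶜ := by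
      intro K α hα hmem
      rcases mem_iUnion₂.mp hmem with ⟨k, _, hk⟩
      exact absurd (hα (φ k) (hφN k)) (not_le.mpr hk)
    have hbound : ∀ K : ℕ, 1 ≤ K → volume Bad ≤ ENNReal.ofReal (25/(ε m * K)) := by
      intro K hK
      exact le_trans (measure_mono (hsub K))
        (main_bound (q := fun k => r (φ k)) hq hlac (hε0 m) (hε2 m) K hK)
    have htend : Tendsto (fun K : ℕ => ENNReal.ofReal (25/(ε m * K))) atTop (nhds 0) := by
      rw [show (0:ℝ≥0∞) = ENNReal.ofReal 0 by simp]
      apply ENNReal.tendsto_ofReal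
      have : (fun K : ℕ => 25/(ε m * K)) = fun K : ℕ => (25/(ε m))/(K:ℝ) := by
        funext K
        rw [div_div]
      rw [this]
      exact tendsto_const_div_atTop_nhds_zero_nat _
    have : volume Bad ≤ 0 :=
      ge_of_tendsto htend (by filter_upwards [eventually_ge_atTop 1] using hbound)
    exact le_antisymm this (zero_le)
  -- the union of bad sets is null
  have hGNull : volume (⋃ m : ℕ, {α : AddCircle (1:ℝ) |
      {n : ℕ | ‖r n • α‖ < ε m}.Finite}) = 0 := by
    refine measure_iUnion_null fun m => ?_
    have hsub : {α : AddCircle (1:ℝ) | {n : ℕ | ‖r n • α‖ < ε m}.Finite}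
        ⊆ ⋃ N : ℕ, {α : AddCircle (1:ℝ) | ∀ n, N ≤ n → ε m ≤ ‖r n • α‖} := by
      intro α hα
      obtain ⟨N, hN⟩ := hα.bddAbove
      refine mem_iUnion.mpr ⟨N+1, fun n hn => ?_⟩
      by_contra hcon
      push_neg at hcon
      have hmem : n ∈ {n : ℕ | ‖r n • α‖ < ε m} := hcon
      have := hN hmem
      omega
    refine measure_mono_null hsub (measure_iUnion_null fun N => hBadNull m N)
  -- good points have the subsequence property
  have hgood : ∀ α : AddCircle (1:ℝ),
      (∀ m : ℕ, {n : ℕ | ‖r n • α‖ < ε m}.Infinite) →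
      ∃ nk : ℕ → ℕ, StrictMono nk ∧
        Tendsto (fun k => ‖(r (nk k)) • α‖) atTop (nhds 0) := by
    intro α hα
    have hpick : ∀ m a : ℕ, ∃ b, b ∈ {n : ℕ | ‖r n • α‖ < ε m} ∧ a < b :=
      fun m a => (hα m).exists_gt a
    set pk : ℕ → ℕ → ℕ := fun m a => (hpick m a).choose with hpk
    have hpk1 : ∀ m a, ‖r (pk m a) • α‖ < ε m := fun m a => (hpick m a).choose_spec.1
    have hpk2 : ∀ m a, a < pk m a := fun m a => (hpick m a).choose_spec.2
    set nk : ℕ → ℕ := fun k => Nat.rec (pk 0 0) (fun k p => pk (k+1) p) k with hnk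
    have hnks : ∀ k, nk (k+1) = pk (k+1) (nk k) := fun k => rfl
    have hmono : StrictMono nk := strictMono_nat_of_lt_succ fun k => by
      rw [hnks]; exact hpk2 _ _
    have hval : ∀ k, ‖r (nk k) • α‖ < ε k := by
      intro k
      cases k with
      | zero => exact hpk1 0 0
      | succ n => rw [hnks]; exact hpk1 _ _
    refine ⟨nk, hmono, ?_⟩
    have h0 : Tendsto (fun k : ℕ => ε k) atTop (nhds 0) := by
      have h1 : Tendsto (fun n : ℕ => (1:ℝ)/((n+2 : ℕ):ℝ)) atTop (nhds 0) :=
        (tendsto_const_div_atTop_nhds_zero_nat 1).comp (tendsto_add_atTop_nat 2)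
      have : (fun k : ℕ => ε k) = fun n : ℕ => (1:ℝ)/((n+2 : ℕ):ℝ) := by
        funext n
        rw [hεdef]
        push_cast
        norm_num
      rw [this]
      exact h1
    exact squeeze_zero (fun k => norm_nonneg _) (fun k => (hval k).le) h0
  -- conclude
  have hsubset : (⋃ m : ℕ, {α : AddCircle (1:ℝ) | {n : ℕ | ‖r n • α‖ < ε m}.Finite})ᶜ
      ⊆ {α : AddCircle (1 : ℝ) | ∃ nk : ℕ → ℕ, StrictMono nk ∧
          Tendsto (fun k => ‖(r (nk k)) • α‖) atTop (nhds 0)} := by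
    intro α hα
    rw [mem_compl_iff, mem_iUnion] at hα
    push_neg at hα
    refine hgood α fun m => ?_
    have := hα m
    rwa [mem_setOf_eq, ← Set.not_infinite, not_not] at this
  refine le_antisymm (le_trans (measure_mono (subset_univ _)) (le_of_eq circle_univ)) ?_
  calc (1:ℝ≥0∞) = volume (univ : Set (AddCircle (1:ℝ))) := circle_univ.symm
    _ ≤ volume (⋃ m : ℕ, {α : AddCircle (1:ℝ) | {n : ℕ | ‖r n • α‖ < ε m}.Finite})
        + volume ((⋃ m : ℕ, {α : AddCircle (1:ℝ) | {n : ℕ | ‖r n • α‖ < ε m}.Finite})ᶜ) := by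
        rw [show (univ : Set (AddCircle (1:ℝ)))
          = (⋃ m : ℕ, {α : AddCircle (1:ℝ) | {n : ℕ | ‖r n • α‖ < ε m}.Finite})
            ∪ (⋃ m : ℕ, {α : AddCircle (1:ℝ) | {n : ℕ | ‖r n • α‖ < ε m}.Finite})ᶜ
          from (union_compl_self _).symm]
        exact measure_union_le _ _
    _ = volume ((⋃ m : ℕ, {α : AddCircle (1:ℝ) | {n : ℕ | ‖r n • α‖ < ε m}.Finite})ᶜ) := by
        rw [hGNull, zero_add]
    _ ≤ _ := measure_mono hsubset
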